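/- arXiv:1308.5435 — 5 statements merged into one kernel-verified Lean document; each statement's English description precedes it below -/
import Mathlib

section
/- Let S be a commutative ring and 𝔞 an ideal of S such that S is 𝔞-adically complete, and fix an integer n ≥ 1. Let φ, ψ ∈ S⟦x⟧ be power series with zero constant term such that the linear coefficient of φ is a unit of S and ψ is a compositional inverse of φ, i.e. ψ∘φ = x. If F ∈ S⟦x⟧ has zero constant term and satisfies property (*) with respect to 𝔞 and n, then the conjugate F' := ψ∘(F∘φ) also satisfies property (*): the coefficients of F' in degrees 1 ≤ i < n lie in 𝔞 and the degree-n coefficient of F' is a unit of S. -/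
open PowerSeries

/-- Substitution of the power series `g` (with zero constant term) into the power
series `f`, i.e. the composite `f ∘ g`.  When the constant coefficient of `g`
vanishes, the degree-`n` coefficient of `f ∘ g` only involves the coefficients of
`f` in degrees `≤ n`, so the following finite sum computes it. -/
noncomputable def PowerSeries.substComp {S : Type*} [CommRing S]
    (g f : PowerSeries S) : PowerSeries S :=
  PowerSeries.mk fun n =>
    ∑ i ∈ Finset.range (n + 1), PowerSeries.coeff i f * PowerSeries.coeff n (g ^ i)

section Aux

variable {S : Type*} [CommRing S]

/-- Units plus ideal elements are units in an adically complete ring. -/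
lemma aux_isUnit_add_mem (𝔞 : Ideal S) [IsAdicComplete 𝔞 S] {u a : S}
    (hu : IsUnit u) (ha : a ∈ 𝔞) : IsUnit (u + a) := by
  obtain ⟨v, rfl⟩ := hu
  have h : a ∈ Ideal.jacobson (⊥ : Ideal S) := IsAdicComplete.le_jacobson_bot 𝔞 ha
  rw [Ideal.mem_jacobson_bot] at h
  have h1 : IsUnit (a * (↑v⁻¹ : S) + 1) := h ↑v⁻¹
  have key : (↑v : S) * (a * ↑v⁻¹ + 1) = ↑v + a := by
    have : (↑v : S) * (a * ↑v⁻¹) = a := by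
      rw [mul_comm (↑v : S), mul_assoc, Units.inv_mul, mul_one]
    rw [mul_add, mul_one, this, add_comm]
  exact key ▸ v.isUnit.mul h1

lemma aux_coeff_pow_mem (𝔞 : Ideal S) (G : PowerSeries S) (h0 : constantCoeff G = 0)
    {M : ℕ} (hG : ∀ k, 1 ≤ k → k ≤ M → coeff k G ∈ 𝔞) (j : ℕ) :
    ∀ m ≤ M, coeff m (G ^ (j + 1)) ∈ 𝔞 := by
  induction j with
  | zero =>
    intro m hm
    rw [pow_one]
    rcases Nat.eq_zero_or_pos m with rfl | hmpos
    · rw [coeff_zero_eq_constantCoeff, h0]; exact Ideal.zero_mem _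
    · exact hG m hmpos hm
  | succ j ih =>
    intro m hm
    rw [pow_succ, PowerSeries.coeff_mul]
    refine Ideal.sum_mem _ fun p hp => Ideal.mul_mem_right _ _ (ih p.1 ?_)
    exact le_trans (Finset.HasAntidiagonal.antidiagonal.fst_le hp) hm

lemma aux_coeff_n_pow_mem (𝔞 : Ideal S) (G : PowerSeries S) (h0 : constantCoeff G = 0)
    {n : ℕ} (hG : ∀ k, 1 ≤ k → k < n → coeff k G ∈ 𝔞) (j : ℕ) (hj : 2 ≤ j) :
    coeff n (G ^ j) ∈ 𝔞 := by
  obtain ⟨j, rfl⟩ : ∃ j', j = 1 + (j' + 1) := ⟨j - 2, by omega⟩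
  rw [pow_add, pow_one, PowerSeries.coeff_mul]
  apply Ideal.sum_mem
  intro p hp
  have hpq := Finset.HasAntidiagonal.mem_antidiagonal.mp hp
  rcases Nat.eq_zero_or_pos p.1 with h1 | h1
  · rw [h1, coeff_zero_eq_constantCoeff, h0, zero_mul]; exact Ideal.zero_mem _
  · rcases Nat.lt_or_ge p.1 n with h2 | h2
    · exact Ideal.mul_mem_right _ _ (hG p.1 h1 h2)
    · have hp2 : p.2 = 0 := by omega
      rw [hp2, coeff_zero_eq_constantCoeff, map_pow, h0, zero_pow (by omega), mul_zero]
      exact Ideal.zero_mem _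

lemma aux_coeff_pow_diag (φ : PowerSeries S) (h0 : constantCoeff φ = 0) (j : ℕ) :
    (∀ q < j, coeff q (φ ^ j) = 0) ∧ coeff j (φ ^ j) = (coeff 1 φ) ^ j := by
  induction j with
  | zero =>
    refine ⟨fun q hq => absurd hq (by omega), by simp⟩
  | succ j ih =>
    constructor
    · intro q hq
      rw [pow_succ, PowerSeries.coeff_mul]
      apply Finset.sum_eq_zero
      intro p hp
      have hpq := Finset.HasAntidiagonal.mem_antidiagonal.mp hp
      rcases Nat.lt_or_ge p.1 j with h | h
      · rw [ih.1 p.1 h, zero_mul]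
      · have hp2 : p.2 = 0 := by omega
        rw [hp2, coeff_zero_eq_constantCoeff, h0, mul_zero]
    · rw [pow_succ, PowerSeries.coeff_mul]
      rw [Finset.sum_eq_single (j, 1)]
      · rw [ih.2, pow_succ]
      · rintro ⟨a, b⟩ hp hne
        have hpq := Finset.HasAntidiagonal.mem_antidiagonal.mp hp
        simp only at hpq
        rcases Nat.lt_or_ge a j with h | h
        · rw [ih.1 a h, zero_mul]
        · have hne' : ¬(a = j ∧ b = 1) := by simpa [Prod.ext_iff] using hne
          have hb : b = 0 := by omega
          simp only [hb, coeff_zero_eq_constantCoeff, h0, mul_zero]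
      · intro h
        exact absurd (Finset.HasAntidiagonal.mem_antidiagonal.mpr (by omega)) h

end Aux

/-- **Lemma 3.2 (power-series form).**  Over an `𝔞`-adically complete ring,
property (*) (coefficients in degrees `< n` lie in `𝔞`, degree-`n` coefficient a
unit) is preserved by conjugation `F ↦ ψ ∘ (F ∘ φ)` by an invertible power
series `φ` with compositional inverse `ψ`. -/
theorem conj_preserves_star {S : Type*} [CommRing S] (𝔞 : Ideal S)
    [IsAdicComplete 𝔞 S] (n : ℕ) (hn : 1 ≤ n)
    (φ ψ F : PowerSeries S)
    (hφ0 : PowerSeries.constantCoeff φ = 0)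
    (hψ0 : PowerSeries.constantCoeff ψ = 0)
    (hφ1 : IsUnit (PowerSeries.coeff 1 φ))
    (hinv : PowerSeries.substComp φ ψ = PowerSeries.X)
    (hF0 : PowerSeries.constantCoeff F = 0)
    (hFlow : ∀ i, 1 ≤ i → i < n → PowerSeries.coeff i F ∈ 𝔞)
    (hFn : IsUnit (PowerSeries.coeff n F)) :
    (∀ i, 1 ≤ i → i < n →
        PowerSeries.coeff i (PowerSeries.substComp (PowerSeries.substComp φ F) ψ) ∈ 𝔞) ∧
      IsUnit (PowerSeries.coeff n (PowerSeries.substComp (PowerSeries.substComp φ F) ψ)) := by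
  set G := PowerSeries.substComp φ F with hGdef
  have coeff_sc : ∀ (g f : PowerSeries S) (m : ℕ), coeff m (PowerSeries.substComp g f)
      = ∑ i ∈ Finset.range (m + 1), coeff i f * coeff m (g ^ i) := by
    intro g f m
    rw [PowerSeries.substComp, PowerSeries.coeff_mk]
  -- constant coefficient of G is zero
  have hG0 : constantCoeff G = 0 := by
    rw [← coeff_zero_eq_constantCoeff, hGdef, coeff_sc]
    simp [coeff_zero_eq_constantCoeff, hF0]
  -- low coefficients of G lie in 𝔞
  have hGlow : ∀ k, 1 ≤ k → k < n → coeff k G ∈ 𝔞 := by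
    intro k hk1 hkn
    rw [hGdef, coeff_sc]
    apply Ideal.sum_mem
    intro j hj
    rcases Nat.eq_zero_or_pos j with rfl | hjpos
    · rw [coeff_zero_eq_constantCoeff, hF0, zero_mul]; exact Ideal.zero_mem _
    · have hjk : j ≤ k := by
        have := Finset.mem_range.mp hj; omega
      exact Ideal.mul_mem_right _ _ (hFlow j hjpos (by omega))
  -- the degree-n coefficient of G is a unit
  have hGn : IsUnit (coeff n G) := by
    rw [hGdef, coeff_sc, ← Finset.sum_erase_add _ _ (Finset.self_mem_range_succ n)]
    have hrest : (∑ j ∈ (Finset.range (n + 1)).erase n,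
        coeff j F * coeff n (φ ^ j)) ∈ 𝔞 := by
      apply Ideal.sum_mem
      intro j hj
      obtain ⟨hjne, hjmem⟩ := Finset.mem_erase.mp hj
      have hjlt : j < n := by
        have := Finset.mem_range.mp hjmem; omega
      rcases Nat.eq_zero_or_pos j with rfl | hjpos
      · rw [coeff_zero_eq_constantCoeff, hF0, zero_mul]; exact Ideal.zero_mem _
      · exact Ideal.mul_mem_right _ _ (hFlow j hjpos hjlt)
    have hunit : IsUnit (coeff n F * coeff n (φ ^ n)) := by
      rw [(aux_coeff_pow_diag φ hφ0 n).2]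
      exact hFn.mul (hφ1.pow n)
    rw [add_comm]
    exact aux_isUnit_add_mem 𝔞 hunit hrest
  -- the unit ψ₁
  have hψ1 : IsUnit (coeff 1 ψ) := by
    have h1 : coeff 1 (PowerSeries.substComp φ ψ) = 1 := by
      rw [hinv, PowerSeries.coeff_X]; simp
    rw [coeff_sc] at h1
    rw [Finset.sum_range_succ, Finset.sum_range_one] at h1
    rw [pow_zero, PowerSeries.coeff_one, pow_one] at h1
    simp only [if_neg (one_ne_zero), mul_zero, zero_add] at h1
    exact IsUnit.of_mul_eq_one _ h1
  constructor
  · intro i hi1 hin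
    rw [coeff_sc]
    apply Ideal.sum_mem
    intro j hj
    rcases Nat.eq_zero_or_pos j with rfl | hjpos
    · rw [coeff_zero_eq_constantCoeff, hψ0, zero_mul]; exact Ideal.zero_mem _
    · obtain ⟨j, rfl⟩ : ∃ j', j = j' + 1 := ⟨j - 1, by omega⟩
      refine Ideal.mul_mem_left _ _ ?_
      exact aux_coeff_pow_mem 𝔞 G hG0 (M := n - 1)
        (fun k hk1 hk2 => hGlow k hk1 (by omega)) j i (by omega)
  · rw [coeff_sc, ← Finset.sum_erase_add _ _
      (Finset.mem_range.mpr (by omega : 1 < n + 1))]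
    have hrest : (∑ j ∈ (Finset.range (n + 1)).erase 1,
        coeff j ψ * coeff n (G ^ j)) ∈ 𝔞 := by
      apply Ideal.sum_mem
      intro j hj
      obtain ⟨hjne, hjmem⟩ := Finset.mem_erase.mp hj
      rcases Nat.eq_zero_or_pos j with rfl | hjpos
      · rw [coeff_zero_eq_constantCoeff, hψ0, zero_mul]; exact Ideal.zero_mem _
      · have hj2 : 2 ≤ j := by omega
        exact Ideal.mul_mem_left _ _ (aux_coeff_n_pow_mem 𝔞 G hG0 hGlow j hj2)
    have hunit : IsUnit (coeff 1 ψ * coeff n (G ^ 1)) := by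
      rw [pow_one]
      exact hψ1.mul hGn
    rw [add_comm]
    exact aux_isUnit_add_mem 𝔞 hunit hrest
end

section
/- Let S be a commutative ring and 𝔞 an ideal of S such that S is 𝔞-adically complete, and fix an integer n ≥ 1. Let F ∈ S⟦x⟧ have zero constant term and satisfy property (*) with respect to 𝔞 and n, and let φ ∈ S⟦x⟧ have zero constant term and unit linear coefficient. Then the pre-composition F∘φ satisfies property (*) with respect to 𝔞 and n: its coefficients in degrees 1 ≤ m < n lie in 𝔞 and its degree-n coefficient is a unit of S. -/
open PowerSeries

lemma aux_unit_add_mem {S : Type*} [CommRing S] (𝔞 : Ideal S)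
    [IsAdicComplete 𝔞 S] {s u : S} (hs : s ∈ 𝔞) (hu : IsUnit u) :
    IsUnit (s + u) := by
  have hjac : s ∈ Ideal.jacobson (⊥ : Ideal S) :=
    IsAdicComplete.le_jacobson_bot 𝔞 hs
  have h := (Ideal.mem_jacobson_bot.mp hjac) (↑hu.unit⁻¹)
  have := hu.mul h
  have heq : u * (s * ↑hu.unit⁻¹ + 1) = s + u := by
    have huu : u * ↑hu.unit⁻¹ = 1 := by
      simpa using hu.unit.mul_inv
    ring_nf
    rw [mul_comm u s, mul_assoc, huu, mul_one]
  rwa [heq] at this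

/-- Pre-composition step of Lemma 3.2: if `F` satisfies property (*) with respect
to `𝔞` and `n`, and `φ` has zero constant term and unit linear coefficient, then
`F ∘ φ` satisfies property (*). -/
theorem precomp_preserves_star {S : Type*} [CommRing S] (𝔞 : Ideal S)
    [IsAdicComplete 𝔞 S] (n : ℕ) (hn : 1 ≤ n)
    (F φ : PowerSeries S)
    (hF0 : PowerSeries.constantCoeff F = 0)
    (hFlow : ∀ i, 1 ≤ i → i < n → PowerSeries.coeff i F ∈ 𝔞)
    (hFn : IsUnit (PowerSeries.coeff n F))
    (hφ0 : PowerSeries.constantCoeff φ = 0)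
    (hφ1 : IsUnit (PowerSeries.coeff 1 φ)) :
    (∀ m, 1 ≤ m → m < n →
        PowerSeries.coeff m (PowerSeries.substComp φ F) ∈ 𝔞) ∧
      IsUnit (PowerSeries.coeff n (PowerSeries.substComp φ F)) := by
  obtain ⟨ψ, hψ⟩ : (PowerSeries.X : PowerSeries S) ∣ φ :=
    PowerSeries.X_dvd_iff.mpr hφ0
  have hψ0 : PowerSeries.coeff 0 ψ = PowerSeries.coeff 1 φ := by
    rw [hψ, PowerSeries.coeff_succ_X_mul]
  have hcoeffpow : ∀ i m : ℕ, m < i → PowerSeries.coeff m (φ ^ i) = 0 := by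
    intro i m hmi
    have : (PowerSeries.X : PowerSeries S) ^ i ∣ φ ^ i :=
      pow_dvd_pow_of_dvd ⟨ψ, hψ⟩ i
    exact PowerSeries.X_pow_dvd_iff.mp this m hmi
  have hcoeffn : PowerSeries.coeff n (φ ^ n)
      = (PowerSeries.coeff 1 φ) ^ n := by
    have : φ ^ n = PowerSeries.X ^ n * ψ ^ n := by
      rw [hψ, mul_pow]
    rw [this]
    have := PowerSeries.coeff_X_pow_mul (ψ ^ n) n 0
    simp only [zero_add] at this
    rw [this]
    rw [PowerSeries.coeff_zero_eq_constantCoeff, map_pow,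
      ← PowerSeries.coeff_zero_eq_constantCoeff, hψ0]
  have hmem : ∀ m, m < n →
      (∑ i ∈ Finset.range (m + 1),
        PowerSeries.coeff i F * PowerSeries.coeff m (φ ^ i)) ∈ 𝔞 := by
    intro m hm
    apply Ideal.sum_mem
    intro i hi
    rcases Nat.eq_zero_or_pos i with h0 | h1
    · subst h0
      rw [PowerSeries.coeff_zero_eq_constantCoeff, hF0, zero_mul]
      exact 𝔞.zero_mem
    · have hi' : i < n := lt_of_le_of_lt (Nat.lt_succ_iff.mp (Finset.mem_range.mp hi)) hm
      exact Ideal.mul_mem_right _ _ (hFlow i h1 hi')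
  constructor
  · intro m hm1 hmn
    simpa [PowerSeries.substComp] using hmem m hmn
  · have hsum : PowerSeries.coeff n (PowerSeries.substComp φ F)
        = (∑ i ∈ Finset.range n,
            PowerSeries.coeff i F * PowerSeries.coeff n (φ ^ i))
          + PowerSeries.coeff n F * PowerSeries.coeff n (φ ^ n) := by
      simp [PowerSeries.substComp, Finset.sum_range_succ]
    rw [hsum]
    have hs : (∑ i ∈ Finset.range n,
        PowerSeries.coeff i F * PowerSeries.coeff n (φ ^ i)) ∈ 𝔞 := by
      apply Ideal.sum_mem
      intro i hi
      rcases Nat.eq_zero_or_pos i with h0 | h1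
      · subst h0
        rw [PowerSeries.coeff_zero_eq_constantCoeff, hF0, zero_mul]
        exact 𝔞.zero_mem
      · exact Ideal.mul_mem_right _ _ (hFlow i h1 (Finset.mem_range.mp hi))
    have hu : IsUnit (PowerSeries.coeff n F * PowerSeries.coeff n (φ ^ n)) := by
      rw [hcoeffn]; exact hFn.mul (hφ1.pow n)
    exact aux_unit_add_mem 𝔞 hs hu
end

section
/- Let S be a commutative ring, 𝔞 an ideal of S, and n ≥ 1 an integer. Let F = Σ_{i≥1} a_i x^i and φ = Σ_{j≥1} b_j x^j be power series over S with zero constant term, and suppose a_i ∈ 𝔞 for all 1 ≤ i < n. Then: (1) for every m with 1 ≤ m < n, the degree-m coefficient of the composite F∘φ lies in 𝔞; and (2) the degree-n coefficient of F∘φ is congruent to a_n · b_1^n modulo 𝔞, i.e. coeff_n(F∘φ) − a_n·(b_1)^n ∈ 𝔞. -/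
open PowerSeries

private lemma coeff_pow_self {S : Type*} [CommRing S] (φ : PowerSeries S)
    (hφ0 : PowerSeries.constantCoeff φ = 0) (n : ℕ) :
    PowerSeries.coeff n (φ ^ n) = (PowerSeries.coeff 1 φ) ^ n := by
  obtain ⟨ψ, rfl⟩ := (PowerSeries.X_dvd_iff).2 hφ0
  have h1 : PowerSeries.coeff 1 (PowerSeries.X * ψ) = PowerSeries.coeff 0 ψ := by
    simpa using PowerSeries.coeff_succ_X_mul 0 ψ
  rw [mul_pow, h1]
  have := PowerSeries.coeff_X_pow_mul (ψ ^ n) n 0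
  simpa [PowerSeries.coeff_zero_eq_constantCoeff, map_pow] using this

/-- Coefficient computation from the proof of Lemma 3.2: if the coefficients
`a_i` of `F` lie in `𝔞` for `1 ≤ i < n`, then the coefficients of `F ∘ φ` in
degrees `1 ≤ m < n` lie in `𝔞`, and its degree-`n` coefficient is congruent to
`a_n · b_1 ^ n` modulo `𝔞`, where `b_1` is the linear coefficient of `φ`. -/
theorem coeff_precomp_mem_and_congr {S : Type*} [CommRing S] (𝔞 : Ideal S)
    (n : ℕ) (hn : 1 ≤ n)
    (F φ : PowerSeries S)
    (hF0 : PowerSeries.constantCoeff F = 0)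
    (hφ0 : PowerSeries.constantCoeff φ = 0)
    (hFlow : ∀ i, 1 ≤ i → i < n → PowerSeries.coeff i F ∈ 𝔞) :
    (∀ m, 1 ≤ m → m < n →
        PowerSeries.coeff m (PowerSeries.substComp φ F) ∈ 𝔞) ∧
      PowerSeries.coeff n (PowerSeries.substComp φ F) -
        PowerSeries.coeff n F * (PowerSeries.coeff 1 φ) ^ n ∈ 𝔞 := by
  have key : ∀ m : ℕ, PowerSeries.coeff m (PowerSeries.substComp φ F) =
      ∑ i ∈ Finset.range (m + 1),
        PowerSeries.coeff i F * PowerSeries.coeff m (φ ^ i) := by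
    intro m; simp [PowerSeries.substComp]
  constructor
  · intro m hm1 hmn
    rw [key]
    refine Ideal.sum_mem _ ?_
    intro i hi
    rcases Nat.eq_zero_or_pos i with rfl | hi1
    · simp [PowerSeries.coeff_zero_eq_constantCoeff, hF0]
    · exact Ideal.mul_mem_right _ _
        (hFlow i hi1 (lt_of_le_of_lt (Nat.lt_succ_iff.1 (Finset.mem_range.1 hi)) hmn))
  · rw [key, Finset.sum_range_succ, coeff_pow_self φ hφ0 n, add_sub_cancel_right]
    refine Ideal.sum_mem _ ?_
    intro i hi
    rcases Nat.eq_zero_or_pos i with rfl | hi1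
    · simp [PowerSeries.coeff_zero_eq_constantCoeff, hF0]
    · exact Ideal.mul_mem_right _ _ (hFlow i hi1 (Finset.mem_range.1 hi))
end

section
/- Let S be a commutative ring and 𝔞 an ideal of S such that S is 𝔞-adically complete, and fix an integer n ≥ 1. Let G ∈ S⟦x⟧ have zero constant term and satisfy property (*) with respect to 𝔞 and n, and let ψ ∈ S⟦x⟧ have zero constant term and unit linear coefficient. Then the post-composition ψ∘G satisfies property (*) with respect to 𝔞 and n: its coefficients in degrees 1 ≤ m < n lie in 𝔞 and its degree-n coefficient is a unit of S. -/
open PowerSeries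

private lemma aux_unit_add {S : Type*} [CommRing S] (𝔞 : Ideal S) [IsAdicComplete 𝔞 S]
    {u a : S} (hu : IsUnit u) (ha : a ∈ 𝔞) : IsUnit (u + a) := by
  obtain ⟨v, rfl⟩ := hu
  have h := IsAdicComplete.le_jacobson_bot 𝔞 ha
  rw [Ideal.mem_jacobson_bot] at h
  have h2 : IsUnit ((v : S) * (a * (↑v⁻¹ : S) + 1)) := v.isUnit.mul (h ↑v⁻¹)
  have h3 : (v : S) * (a * (↑v⁻¹ : S) + 1) = ↑v + a := by
    rw [mul_add, mul_one]
    have : (v : S) * (a * ↑v⁻¹) = a * ((v : S) * ↑v⁻¹) := by ring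
    rw [this, Units.mul_inv, mul_one, add_comm]
  rwa [h3] at h2

private lemma coeff_mul_mem_low {S : Type*} [CommRing S] (𝔞 : Ideal S) {n : ℕ}
    {G : PowerSeries S} (hG0 : PowerSeries.constantCoeff G = 0)
    (hGlow : ∀ i, 1 ≤ i → i < n → PowerSeries.coeff i G ∈ 𝔞)
    (H : PowerSeries S) {m : ℕ} (hm : m < n) :
    PowerSeries.coeff m (G * H) ∈ 𝔞 := by
  rw [PowerSeries.coeff_mul]
  refine Ideal.sum_mem _ fun p hp => ?_
  rw [Finset.HasAntidiagonal.mem_antidiagonal] at hp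
  rcases Nat.eq_zero_or_pos p.1 with h0 | h1
  · rw [h0, PowerSeries.coeff_zero_eq_constantCoeff, hG0, zero_mul]
    exact 𝔞.zero_mem
  · exact 𝔞.mul_mem_right _ (hGlow p.1 h1 (by omega))

private lemma coeff_pow_mem_low {S : Type*} [CommRing S] (𝔞 : Ideal S) {n : ℕ}
    {G : PowerSeries S} (hG0 : PowerSeries.constantCoeff G = 0)
    (hGlow : ∀ i, 1 ≤ i → i < n → PowerSeries.coeff i G ∈ 𝔞)
    {i : ℕ} (hi : 1 ≤ i) {m : ℕ} (hm : m < n) :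
    PowerSeries.coeff m (G ^ i) ∈ 𝔞 := by
  obtain ⟨j, rfl⟩ : ∃ j, i = j + 1 := ⟨i - 1, by omega⟩
  rw [pow_succ']
  exact coeff_mul_mem_low 𝔞 hG0 hGlow _ hm

private lemma coeff_pow_mem_top {S : Type*} [CommRing S] (𝔞 : Ideal S) {n : ℕ}
    {G : PowerSeries S} (hG0 : PowerSeries.constantCoeff G = 0)
    (hGlow : ∀ i, 1 ≤ i → i < n → PowerSeries.coeff i G ∈ 𝔞)
    {i : ℕ} (hi : 2 ≤ i) :
    PowerSeries.coeff n (G ^ i) ∈ 𝔞 := by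
  obtain ⟨j, rfl⟩ : ∃ j, i = j + 2 := ⟨i - 2, by omega⟩
  rw [show j + 2 = (j + 1) + 1 by ring, pow_succ']
  rw [PowerSeries.coeff_mul]
  refine Ideal.sum_mem _ fun p hp => ?_
  rw [Finset.HasAntidiagonal.mem_antidiagonal] at hp
  rcases Nat.eq_zero_or_pos p.1 with h0 | h1
  · rw [h0, PowerSeries.coeff_zero_eq_constantCoeff, hG0, zero_mul]
    exact 𝔞.zero_mem
  rcases Nat.lt_or_ge p.1 n with hlt | hge
  · exact 𝔞.mul_mem_right _ (hGlow p.1 h1 hlt)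
  · have hp2 : p.2 = 0 := by omega
    rw [hp2, PowerSeries.coeff_zero_eq_constantCoeff, map_pow, hG0, zero_pow (by omega),
      mul_zero]
    exact 𝔞.zero_mem

/-- Post-composition step of Lemma 3.2: if `G` satisfies property (*) with
respect to `𝔞` and `n`, and `ψ` has zero constant term and unit linear
coefficient, then `ψ ∘ G` satisfies property (*). -/
theorem postcomp_preserves_star {S : Type*} [CommRing S] (𝔞 : Ideal S)
    [IsAdicComplete 𝔞 S] (n : ℕ) (hn : 1 ≤ n)
    (G ψ : PowerSeries S)
    (hG0 : PowerSeries.constantCoeff G = 0)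
    (hGlow : ∀ i, 1 ≤ i → i < n → PowerSeries.coeff i G ∈ 𝔞)
    (hGn : IsUnit (PowerSeries.coeff n G))
    (hψ0 : PowerSeries.constantCoeff ψ = 0)
    (hψ1 : IsUnit (PowerSeries.coeff 1 ψ)) :
    (∀ m, 1 ≤ m → m < n →
        PowerSeries.coeff m (PowerSeries.substComp G ψ) ∈ 𝔞) ∧
      IsUnit (PowerSeries.coeff n (PowerSeries.substComp G ψ)) := by
  constructor
  · intro m hm1 hmn
    rw [PowerSeries.substComp, PowerSeries.coeff_mk]
    refine Ideal.sum_mem _ fun i hi => ?_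
    rcases Nat.eq_zero_or_pos i with h0 | h1
    · rw [h0, PowerSeries.coeff_zero_eq_constantCoeff, hψ0, zero_mul]
      exact 𝔞.zero_mem
    · exact 𝔞.mul_mem_left _ (coeff_pow_mem_low 𝔞 hG0 hGlow h1 hmn)
  · rw [PowerSeries.substComp, PowerSeries.coeff_mk]
    have h1mem : 1 ∈ Finset.range (n + 1) := Finset.mem_range.mpr (by omega)
    rw [← Finset.add_sum_erase _ _ h1mem, pow_one]
    refine aux_unit_add 𝔞 (hψ1.mul hGn) ?_
    refine Ideal.sum_mem _ fun i hi => ?_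
    rw [Finset.mem_erase, Finset.mem_range] at hi
    rcases Nat.eq_zero_or_pos i with h0 | hpos
    · rw [h0, PowerSeries.coeff_zero_eq_constantCoeff, hψ0, zero_mul]
      exact 𝔞.zero_mem
    · have h2 : 2 ≤ i := by omega
      exact 𝔞.mul_mem_left _ (coeff_pow_mem_top 𝔞 hG0 hGlow h2)
end

section
/- Let k be a finite field. Let A = k⟦x,y⟧ be the formal power series ring in two variables over k, let B be the localization of A away from the element y (i.e. B = y^{-1}A, obtained by inverting y), and let R be the adic completion of B with respect to the ideal of B generated by the image of x. Then R is isomorphic as a commutative ring to k((y))⟦x⟧, the ring of formal power series in x over the field k((y)) of formal Laurent series in y over k. -/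
set_option synthInstance.maxHeartbeats 1000000
set_option maxHeartbeats 2000000
noncomputable section
namespace CLPIL
open PowerSeries

variable (k : Type*) [Field k]

abbrev yy : PowerSeries (PowerSeries k) := PowerSeries.C (R := PowerSeries k) PowerSeries.X

abbrev B := Localization.Away (yy k)

/-- The map k⟦x,y⟧ → k((y))⟦x⟧. -/
def mres : PowerSeries (PowerSeries k) →+* PowerSeries (LaurentSeries k) :=
  PowerSeries.map (algebraMap (PowerSeries k) (LaurentSeries k))

lemma algebraMap_PS_injective :
    Function.Injective (algebraMap (PowerSeries k) (LaurentSeries k)) := by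
  rw [LaurentSeries.coe_algebraMap]
  exact HahnSeries.ofPowerSeries_injective

lemma isUnit_mres_yy : IsUnit (mres k (yy k)) := by
  rw [mres, yy, PowerSeries.map_C]
  apply RingHom.isUnit_map
  apply isUnit_iff_ne_zero.mpr
  intro h
  exact PowerSeries.X_ne_zero ((map_eq_zero_iff _ (algebraMap_PS_injective k)).mp h)

/-- The map B → k((y))⟦x⟧. -/
def Φ : B k →+* PowerSeries (LaurentSeries k) :=
  IsLocalization.Away.lift (yy k) (isUnit_mres_yy k)

lemma Φ_alg (a : PowerSeries (PowerSeries k)) :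
    Φ k (algebraMap _ (B k) a) = mres k a :=
  IsLocalization.Away.lift_eq (yy k) (isUnit_mres_yy k) a

end CLPIL

namespace CLPIL
open PowerSeries
variable (k : Type*) [Field k]

lemma smul_top_eq {R : Type*} [CommRing R] (I : Ideal R) (n : ℕ) :
    (I ^ n • ⊤ : Ideal R) = I ^ n := by
  ext x; simp

lemma mem_pow_iff_dvd {R : Type*} [CommRing R] (a : R) (n : ℕ) (b : R) :
    b ∈ ((Ideal.span {a}) ^ n • ⊤ : Ideal R) ↔ a ^ n ∣ b := by
  rw [smul_top_eq, Ideal.span_singleton_pow, Ideal.mem_span_singleton]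

abbrev xB : B k := algebraMap _ (B k) (PowerSeries.X : PowerSeries (PowerSeries k))

abbrev II : Ideal (B k) := Ideal.span {xB k}

abbrev JJ : Ideal (PowerSeries (LaurentSeries k)) := Ideal.span {PowerSeries.X}

lemma Φ_xB : Φ k (xB k) = PowerSeries.X := by
  rw [Φ_alg, mres, PowerSeries.map_X]

/-- Injectivity core: `Φ⁻¹((X)^n) ⊆ (x)^n`. -/
lemma mem_of_phi_mem (n : ℕ) (b : B k) (hb : Φ k b ∈ (JJ k ^ n • ⊤ : Ideal _)) :
    b ∈ (II k ^ n • ⊤ : Ideal _) := by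
  rw [mem_pow_iff_dvd] at hb ⊢
  obtain ⟨⟨a, d⟩, hsurj⟩ := IsLocalization.surj (Submonoid.powers (yy k)) b
  have hdunit : IsUnit (algebraMap _ (B k) (d : PowerSeries (PowerSeries k))) :=
    IsLocalization.map_units (B k) d
  -- Φ b * mres d = mres a
  have h1 : Φ k b * mres k (d : PowerSeries (PowerSeries k)) = mres k a := by
    rw [← Φ_alg, ← Φ_alg, ← map_mul, hsurj]
  have h2 : (PowerSeries.X : PowerSeries (LaurentSeries k)) ^ n ∣ mres k a := by
    rw [← h1]; exact Dvd.dvd.mul_right hb _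
  have h3 : (PowerSeries.X : PowerSeries (PowerSeries k)) ^ n ∣ a := by
    rw [PowerSeries.X_pow_dvd_iff] at h2 ⊢
    intro m hm
    apply algebraMap_PS_injective k
    rw [map_zero, ← PowerSeries.coeff_map]
    exact h2 m hm
  obtain ⟨c, rfl⟩ := h3
  -- b = alg (X^n * c) * (alg d)⁻¹
  refine ⟨algebraMap _ (B k) c * ↑hdunit.unit⁻¹, ?_⟩
  apply hdunit.mul_left_cancel
  rw [mul_comm ((algebraMap _ (B k)) (d : PowerSeries (PowerSeries k))) b, hsurj,
    map_mul, map_pow]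
  have h4 : (↑hdunit.unit⁻¹ : B k) * (algebraMap _ (B k)) (d : PowerSeries (PowerSeries k)) = 1 :=
    hdunit.val_inv_mul
  linear_combination (-(xB k ^ n * (algebraMap _ (B k)) c)) * h4

/-- Surjectivity core: every element of `k((y))⟦x⟧ / (X)^n` comes from `B`. -/
lemma phi_surj (n : ℕ) (s : PowerSeries (LaurentSeries k)) :
    ∃ b : B k, Ideal.Quotient.mk (JJ k ^ n • ⊤ : Ideal _) (Φ k b)
      = Ideal.Quotient.mk _ s := by
  obtain ⟨d, hint⟩ := IsLocalization.exist_integer_multiples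
    (Submonoid.powers (PowerSeries.X : PowerSeries k)) (Finset.range n)
    (fun i => PowerSeries.coeff i s)
  -- numerator power series
  set a : PowerSeries (PowerSeries k) := PowerSeries.mk
    (fun i => if h : i ∈ Finset.range n then (hint i h).choose else 0) with ha
  obtain ⟨m, hm⟩ := d.prop
  -- C d = yy^m in k⟦x,y⟧
  have hCd : (yy k) ^ m = PowerSeries.C (R := PowerSeries k) (d : PowerSeries k) := by
    rw [yy, ← map_pow]
    exact congrArg _ hm
  have hdunit : IsUnit (algebraMap _ (B k) ((yy k) ^ m)) :=
    IsLocalization.map_units (B k) ⟨(yy k) ^ m, Submonoid.pow_mem _ (Submonoid.mem_powers _) m⟩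
  -- key congruence: mres (C d) * s ≡ mres a mod X^n
  have hkey : Ideal.Quotient.mk (JJ k ^ n • ⊤ : Ideal _) (mres k ((yy k) ^ m) * s)
      = Ideal.Quotient.mk _ (mres k a) := by
    rw [Ideal.Quotient.mk_eq_mk_iff_sub_mem, mem_pow_iff_dvd, PowerSeries.X_pow_dvd_iff]
    intro i hi
    have hi' : i ∈ Finset.range n := Finset.mem_range.mpr hi
    have hspec := (hint i hi').choose_spec
    rw [map_sub, hCd, mres, PowerSeries.map_C, PowerSeries.coeff_C_mul,
      PowerSeries.coeff_map, ha, PowerSeries.coeff_mk, dif_pos hi', hspec,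
      Algebra.smul_def, sub_self]
  refine ⟨↑hdunit.unit⁻¹ * algebraMap _ (B k) a, ?_⟩
  have h1 : Φ k (↑hdunit.unit⁻¹ : B k) * mres k ((yy k) ^ m) = 1 := by
    rw [← Φ_alg, ← map_mul, IsUnit.val_inv_mul, map_one]
  calc Ideal.Quotient.mk (JJ k ^ n • ⊤ : Ideal _) (Φ k (↑hdunit.unit⁻¹ * algebraMap _ (B k) a))
      = Ideal.Quotient.mk _ (Φ k (↑hdunit.unit⁻¹ : B k) * mres k a) := by
        rw [map_mul, Φ_alg]
    _ = Ideal.Quotient.mk _ (Φ k (↑hdunit.unit⁻¹ : B k) * (mres k ((yy k) ^ m) * s)) := by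
        rw [map_mul, map_mul, hkey]
    _ = Ideal.Quotient.mk _ s := by
        rw [← mul_assoc, h1, one_mul]

lemma comap_le (n : ℕ) :
    (II k ^ n • ⊤ : Ideal (B k)) ≤ (JJ k ^ n • ⊤ : Ideal _).comap (Φ k) := by
  intro b hb
  rw [mem_pow_iff_dvd] at hb
  rw [Ideal.mem_comap, mem_pow_iff_dvd]
  obtain ⟨c, rfl⟩ := hb
  rw [map_mul, map_pow, Φ_xB]
  exact dvd_mul_right _ _

/-- The induced map on the `n`-th quotients. -/
def Φbar (n : ℕ) : B k ⧸ (II k ^ n • ⊤ : Ideal (B k)) →+*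
    PowerSeries (LaurentSeries k) ⧸ (JJ k ^ n • ⊤ : Ideal (PowerSeries (LaurentSeries k))) :=
  Ideal.quotientMap _ (Φ k) (comap_le k n)

lemma Φbar_mk (n : ℕ) (b : B k) :
    Φbar k n (Ideal.Quotient.mk _ b) = Ideal.Quotient.mk _ (Φ k b) :=
  Ideal.quotientMap_mk

lemma Φbar_bijective (n : ℕ) : Function.Bijective (Φbar k n) := by
  constructor
  · rw [injective_iff_map_eq_zero]
    intro c hc
    obtain ⟨b, rfl⟩ := Ideal.Quotient.mk_surjective c
    rw [Φbar_mk, Ideal.Quotient.eq_zero_iff_mem] at hc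
    rw [Ideal.Quotient.eq_zero_iff_mem]
    exact mem_of_phi_mem k n b hc
  · intro c
    obtain ⟨s, rfl⟩ := Ideal.Quotient.mk_surjective c
    obtain ⟨b, hb⟩ := phi_surj k n s
    exact ⟨Ideal.Quotient.mk _ b, by rw [Φbar_mk, hb]⟩

/-- The level-`n` ring isomorphism. -/
def χ (n : ℕ) : (B k ⧸ (II k ^ n • ⊤ : Ideal (B k))) ≃+*
    (PowerSeries (LaurentSeries k) ⧸ (JJ k ^ n • ⊤ : Ideal (PowerSeries (LaurentSeries k)))) :=
  RingEquiv.ofBijective (Φbar k n) (Φbar_bijective k n)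

lemma χ_compat {m n : ℕ} (hmn : m ≤ n) (c : B k ⧸ (II k ^ n • ⊤ : Ideal (B k))) :
    AdicCompletion.transitionMap (JJ k) _ hmn (χ k n c)
      = χ k m (AdicCompletion.transitionMap (II k) _ hmn c) := by
  obtain ⟨b, rfl⟩ := Ideal.Quotient.mk_surjective c
  show AdicCompletion.transitionMap (JJ k) _ hmn (Φbar k n (Ideal.Quotient.mk _ b)) = _
  rw [Φbar_mk]
  rw [AdicCompletion.transitionMap_ideal_mk, AdicCompletion.transitionMap_ideal_mk]
  exact (Φbar_mk k m b).symm

/-- The induced isomorphism on adic completions. -/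
def Θ : AdicCompletion (II k) (B k) ≃+*
    AdicCompletion (JJ k) (PowerSeries (LaurentSeries k)) where
  toFun f := ⟨fun n => χ k n (f.val n), fun {m n} hmn => by
    rw [χ_compat k hmn, f.property hmn]⟩
  invFun g := ⟨fun n => (χ k n).symm (g.val n), fun {m n} hmn => by
    apply (χ k m).injective
    rw [← χ_compat k hmn, RingEquiv.apply_symm_apply, RingEquiv.apply_symm_apply,
      g.property hmn]⟩
  left_inv f := Subtype.ext (funext fun n => (χ k n).symm_apply_apply _)
  right_inv g := Subtype.ext (funext fun n => (χ k n).apply_symm_apply _)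
  map_mul' f g := Subtype.ext (funext fun n => map_mul (χ k n) _ _)
  map_add' f g := Subtype.ext (funext fun n => map_add (χ k n) _ _)

lemma val_algebraMap (s : PowerSeries (LaurentSeries k)) (n : ℕ) :
    (algebraMap _ (AdicCompletion (JJ k) (PowerSeries (LaurentSeries k))) s).val n
      = Ideal.Quotient.mk _ s := rfl

/-- Power series rings are complete for the `X`-adic topology. -/
lemma algebraMap_bijective :
    Function.Bijective
      (algebraMap (PowerSeries (LaurentSeries k))
        (AdicCompletion (JJ k) (PowerSeries (LaurentSeries k)))) := by
  constructor
  · rw [injective_iff_map_eq_zero]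
    intro s hs
    refine PowerSeries.ext fun i => ?_
    have h1 : (algebraMap _ (AdicCompletion (JJ k) (PowerSeries (LaurentSeries k))) s).val (i + 1) = 0 := by rw [hs]; rfl
    rw [val_algebraMap, Ideal.Quotient.eq_zero_iff_mem, mem_pow_iff_dvd,
      PowerSeries.X_pow_dvd_iff] at h1
    rw [map_zero]
    exact h1 i (by omega)
  · intro f
    -- choose representatives
    have hrep : ∀ n, ∃ s, Ideal.Quotient.mk (JJ k ^ n • ⊤ : Ideal _) s = f.val n :=
      fun n => Ideal.Quotient.mk_surjective _
    choose r hr using hrep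
    refine ⟨PowerSeries.mk (fun i => PowerSeries.coeff i (r (i + 1))), ?_⟩
    apply Subtype.ext
    funext n
    rw [val_algebraMap, ← hr n, Ideal.Quotient.mk_eq_mk_iff_sub_mem, mem_pow_iff_dvd,
      PowerSeries.X_pow_dvd_iff]
    intro i hi
    have hcomp : AdicCompletion.transitionMap (JJ k) _ (by omega : i + 1 ≤ n) (f.val n)
        = f.val (i + 1) := f.property _
    rw [← hr n, ← hr (i + 1), AdicCompletion.transitionMap_ideal_mk,
      Ideal.Quotient.mk_eq_mk_iff_sub_mem, mem_pow_iff_dvd, PowerSeries.X_pow_dvd_iff] at hcomp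
    have := hcomp i (by omega)
    rw [map_sub] at this ⊢
    rw [PowerSeries.coeff_mk]
    rw [sub_eq_zero] at this ⊢
    exact this.symm

/-- The completion iso. -/
def finalEquiv : AdicCompletion (II k) (B k) ≃+* PowerSeries (LaurentSeries k) :=
  (Θ k).trans
    (RingEquiv.ofBijective
      (algebraMap (PowerSeries (LaurentSeries k))
        (AdicCompletion (JJ k) (PowerSeries (LaurentSeries k))))
      (algebraMap_bijective k)).symm

end CLPIL
end

/-- Section 2.3 of the paper: for a finite field `k`, the completion of
`y⁻¹ k⟦x,y⟧` at the ideal `(x)` is isomorphic to `k((y))⟦x⟧`.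

Here `k⟦x,y⟧` is realized as `PowerSeries (PowerSeries k)` with inner variable
`y` (embedded via the constant-coefficient map `C`) and outer variable `x`. -/
theorem completion_of_localized_powerSeries_iso_laurent (k : Type*) [Field k] [Fintype k] :
    Nonempty
      (AdicCompletion
          (Ideal.span
            {algebraMap (PowerSeries (PowerSeries k))
              (Localization.Away
                ((PowerSeries.C (R := PowerSeries k)) (PowerSeries.X : PowerSeries k)))
              (PowerSeries.X : PowerSeries (PowerSeries k))})
          (Localization.Away
            ((PowerSeries.C (R := PowerSeries k)) (PowerSeries.X : PowerSeries k))) ≃+*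
        PowerSeries (LaurentSeries k)) :=
  ⟨CLPIL.finalEquiv k⟩
end
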